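/- Fourth-order compact (HODIE) quadrature identity: there is an absolute constant C such that for every h > 0, every x ∈ ℝ, and every six times continuously differentiable function g : [x−h, x+h] → ℝ, | (g(x−h) − 2g(x) + g(x+h))/h² − ( (1/12)g''(x−h) + (5/6)g''(x) + (1/12)g''(x+h) ) | ≤ C h⁴ · max_{y ∈ [x−h, x+h]} |g⁽⁶⁾(y)|. -/

import Mathlib

open Set

private lemma aux_iter_comp {s : Set ℝ} (hs : UniqueDiffOn ℝ s) {g : ℝ → ℝ} (k : ℕ) {y : ℝ}
    (hy : y ∈ s) :
    iteratedDerivWithin k (iteratedDerivWithin 2 g s) s y = iteratedDerivWithin (k + 2) g s y := by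
  have e : Set.EqOn (iteratedDerivWithin 2 g s) ((fun u : ℝ → ℝ => derivWithin u s)^[2] g) s :=
    fun z hz => iteratedDerivWithin_eq_iterate
  calc iteratedDerivWithin k (iteratedDerivWithin 2 g s) s y
      = iteratedDerivWithin k ((fun u : ℝ → ℝ => derivWithin u s)^[2] g) s y :=
        iteratedDerivWithin_congr e hy
    _ = (fun u : ℝ → ℝ => derivWithin u s)^[k] ((fun u : ℝ → ℝ => derivWithin u s)^[2] g) y :=
        iteratedDerivWithin_eq_iterate
    _ = (fun u : ℝ → ℝ => derivWithin u s)^[k + 2] g y := by rw [Function.iterate_add_apply]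
    _ = iteratedDerivWithin (k + 2) g s y := iteratedDerivWithin_eq_iterate.symm

/-- Fourth-order compact (HODIE) quadrature identity: there is an absolute
constant `C` such that for every `h > 0` and every `C⁶` function `g` on
`[x−h, x+h]`,
`|δ²g(x) − ((1/12)g''(x−h) + (5/6)g''(x) + (1/12)g''(x+h))| ≤ C h⁴ max |g⁽⁶⁾|`. -/
theorem stmt_19 :
    ∃ C : ℝ, ∀ h : ℝ, 0 < h → ∀ x : ℝ, ∀ g : ℝ → ℝ,
      ContDiffOn ℝ 6 g (Set.Icc (x - h) (x + h)) →
      ∀ Mg : ℝ,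
        (∀ y ∈ Set.Icc (x - h) (x + h),
          |iteratedDerivWithin 6 g (Set.Icc (x - h) (x + h)) y| ≤ Mg) →
        |(g (x - h) - 2 * g x + g (x + h)) / h^2
            - ((1/12) * iteratedDerivWithin 2 g (Set.Icc (x - h) (x + h)) (x - h)
              + (5/6) * iteratedDerivWithin 2 g (Set.Icc (x - h) (x + h)) x
              + (1/12) * iteratedDerivWithin 2 g (Set.Icc (x - h) (x + h)) (x + h))|
          ≤ C * h^4 * Mg := by
  refine ⟨1, fun h hh x g hg Mg hMg => ?_⟩
  set s : Set ℝ := Set.Icc (x - h) (x + h) with hs_def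
  have hab : x - h ≤ x + h := by linarith
  have hlt : x - h < x + h := by linarith
  have hs : UniqueDiffOn ℝ s := uniqueDiffOn_Icc hlt
  have ham : x - h ∈ s := ⟨le_refl _, hab⟩
  have hxm : x ∈ s := ⟨by linarith, by linarith⟩
  have hbm : x + h ∈ s := ⟨hab, le_refl _⟩
  have hMg0 : 0 ≤ Mg := le_trans (abs_nonneg _) (hMg _ ham)
  set f : ℝ → ℝ := iteratedDerivWithin 2 g s with hf_def
  -- regularity
  have hg6 : ContDiffOn ℝ ((5 : ℕ) + 1) g s := by exact_mod_cast hg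
  have hf4 : ContDiffOn ℝ ((3 : ℕ) + 1) f s := by
    have h1 : ContDiffOn ℝ 5 (derivWithin g s) s := hg.derivWithin hs (by norm_num)
    have h2 : ContDiffOn ℝ ((3 : ℕ) + 1) (derivWithin (derivWithin g s) s) s := by
      exact_mod_cast h1.derivWithin hs (by norm_num)
    refine h2.congr fun z hz => ?_
    rw [hf_def, iteratedDerivWithin_eq_iterate]
    rfl
  -- derivative bounds
  have hC6 : ∀ y ∈ s, ‖iteratedDerivWithin ((5 : ℕ) + 1) g s y‖ ≤ Mg := by
    intro y hy
    rw [Real.norm_eq_abs]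
    exact hMg y hy
  have hC4 : ∀ y ∈ s, ‖iteratedDerivWithin ((3 : ℕ) + 1) f s y‖ ≤ Mg := by
    intro y hy
    rw [Real.norm_eq_abs, hf_def, aux_iter_comp hs 4 hy]
    exact hMg y hy
  -- Taylor remainders
  have R1 := taylor_mean_remainder_bound hab hg6 hxm hC6
  have R2 := taylor_mean_remainder_bound hab hg6 hbm hC6
  have S1 := taylor_mean_remainder_bound hab hf4 hxm hC4
  have S2 := taylor_mean_remainder_bound hab hf4 hbm hC4
  simp only [Real.norm_eq_abs] at R1 R2 S1 S2
  set r1 : ℝ := g x - taylorWithinEval g 5 s (x - h) x with hr1_def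
  set r2 : ℝ := g (x + h) - taylorWithinEval g 5 s (x - h) (x + h) with hr2_def
  set s1 : ℝ := f x - taylorWithinEval f 3 s (x - h) x with hs1_def
  set s2 : ℝ := f (x + h) - taylorWithinEval f 3 s (x - h) (x + h) with hs2_def
  have hx1 : x - (x - h) = h := by ring
  have hx2 : x + h - (x - h) = 2 * h := by ring
  rw [hx1] at R1 S1
  rw [hx2] at R2 S2
  norm_num [Nat.factorial] at R1 R2 S1 S2
  -- the polynomial identity
  have e2 : ∀ k : ℕ, iteratedDerivWithin k f s (x - h)
      = iteratedDerivWithin (k + 2) g s (x - h) := fun k => aux_iter_comp hs k ham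
  have poly : (g (x - h) - 2 * taylorWithinEval g 5 s (x - h) x
        + taylorWithinEval g 5 s (x - h) (x + h)) / h ^ 2
      = (1/12) * f (x - h) + (5/6) * taylorWithinEval f 3 s (x - h) x
        + (1/12) * taylorWithinEval f 3 s (x - h) (x + h) := by
    have hfa : f (x - h) = iteratedDerivWithin 2 g s (x - h) := rfl
    rw [taylor_within_apply, taylor_within_apply, taylor_within_apply, taylor_within_apply]
    simp only [Finset.sum_range_succ, Finset.sum_range_zero, smul_eq_mul, hx1, hx2,
      e2 0, e2 1, e2 2, e2 3, hfa, iteratedDerivWithin_zero]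
    norm_num [Nat.factorial]
    field_simp
    ring
  have key : (g (x - h) - 2 * g x + g (x + h)) / h ^ 2
      - ((1/12) * f (x - h) + (5/6) * f x + (1/12) * f (x + h))
      = (-2 * r1 + r2) / h ^ 2 - ((5/6) * s1 + (1/12) * s2) := by
    rw [hr1_def, hr2_def, hs1_def, hs2_def]
    linear_combination poly
  have h2 : (0 : ℝ) < h ^ 2 := by positivity
  rw [key]
  have e1 : |(-2 * r1 + r2) / h ^ 2 - ((5/6) * s1 + (1/12) * s2)|
      ≤ (2 * |r1| + |r2|) / h ^ 2 + ((5/6) * |s1| + (1/12) * |s2|) := by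
    calc |(-2 * r1 + r2) / h ^ 2 - ((5/6) * s1 + (1/12) * s2)|
        ≤ |(-2 * r1 + r2) / h ^ 2| + |(5/6) * s1 + (1/12) * s2| := abs_sub _ _
      _ ≤ (2 * |r1| + |r2|) / h ^ 2 + ((5/6) * |s1| + (1/12) * |s2|) := by
          gcongr ?_ + ?_
          · rw [abs_div, abs_of_pos h2]
            gcongr
            calc |(-2 * r1 + r2)| ≤ |(-2) * r1| + |r2| := abs_add_le _ _
              _ = 2 * |r1| + |r2| := by rw [abs_mul]; norm_num
          · calc |(5/6) * s1 + (1/12) * s2| ≤ |(5/6) * s1| + |(1/12) * s2| := abs_add_le _ _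
              _ = (5/6) * |s1| + (1/12) * |s2| := by rw [abs_mul, abs_mul, abs_of_pos (by norm_num : (0:ℝ) < 5/6), abs_of_pos (by norm_num : (0:ℝ) < 1/12)]
  refine le_trans e1 ?_
  have hb1 : (2 * |r1| + |r2|) / h ^ 2 ≤ (2 * (Mg * h ^ 6 / 120) + Mg * (2*h) ^ 6 / 120) / h ^ 2 := by
    gcongr
  have hb2 : (5/6) * |s1| + (1/12) * |s2| ≤ (5/6) * (Mg * h ^ 4 / 6) + (1/12) * (Mg * (2*h) ^ 4 / 6) := by
    gcongr
  have hfin : (2 * (Mg * h ^ 6 / 120) + Mg * (2*h) ^ 6 / 120) / h ^ 2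
      + ((5/6) * (Mg * h ^ 4 / 6) + (1/12) * (Mg * (2*h) ^ 4 / 6)) ≤ 1 * h ^ 4 * Mg := by
    have hne : h ≠ 0 := ne_of_gt hh
    rw [div_add' _ _ _ (ne_of_gt h2), div_le_iff₀ h2]
    ring_nf
    nlinarith [pow_nonneg hh.le 6, pow_nonneg hh.le 4, mul_nonneg hMg0 (pow_nonneg hh.le 6)]
  linarith [hb1, hb2]
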